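/- Let r₁, r₂ ≥ 1 and let m_{1,2} ≤ ⋯ ≤ m_{r₂,2} and m_{1,1} ≤ ⋯ ≤ m_{r₁,1} ≤ −1 be integers with m_{r₂,2} ≥ r₁. Then the element x_{α₂}(m_{1,2})⋯x_{α₂}(m_{r₂,2})·x_{α₁}(m_{1,1})⋯x_{α₁}(m_{r₁,1}) of U(n̄) is a ℂ-linear combination of elements x_{α₂}(m'_{1,2})⋯x_{α₂}(m'_{r₂,2})·x_{α₁}(m'_{1,1})⋯x_{α₁}(m'_{r₁,1}) with m'_{1,2} ≤ ⋯ ≤ m'_{r₂,2} ≤ r₁ − 1, m'_{1,1} ≤ ⋯ ≤ m'_{r₁,1} ≤ −1 and with the same total index sum (m'_{1,2} + ⋯ + m'_{r₁,1} = m_{1,2} + ⋯ + m_{r₁,1}), plus an element of the left ideal U(n̄)n̄⁺. -/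

import Mathlib

open scoped TensorProduct

noncomputable section

/-- 3×3 complex matrices 𝔤𝔩(3,ℂ), with the commutator Lie bracket. -/
abbrev Mat3 : Type := Matrix (Fin 3) (Fin 3) ℂ

attribute [local instance 100] LieRing.ofAssociativeRing

lemma upperTri_mul {a b : Mat3} (ha : ∀ i j : Fin 3, j ≤ i → a i j = 0)
    (hb : ∀ i j : Fin 3, j ≤ i → b i j = 0) :
    ∀ i j : Fin 3, j ≤ i → (a * b) i j = 0 := by
  intro i j hij
  rw [Matrix.mul_apply]
  refine Finset.sum_eq_zero fun k _ => ?_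
  by_cases hk : k ≤ i
  · rw [ha i k hk, zero_mul]
  · rw [hb k j (hij.trans (not_le.mp hk).le), mul_zero]

/-- The Lie algebra 𝔫 of strictly upper triangular 3×3 complex matrices. -/
def strictUpper : LieSubalgebra ℂ Mat3 where
  carrier := {M : Mat3 | ∀ i j : Fin 3, j ≤ i → M i j = 0}
  add_mem' := fun {a b} ha hb i j hij => by
    simp only [Matrix.add_apply, ha i j hij, hb i j hij, add_zero]
  zero_mem' := fun i j _ => rfl
  smul_mem' := fun c a ha i j hij => by
    simp only [Matrix.smul_apply, ha i j hij, smul_zero]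
  lie_mem' := fun {a b} ha hb i j hij => by
    rw [Ring.lie_def, Matrix.sub_apply, upperTri_mul ha hb i j hij,
      upperTri_mul hb ha i j hij, sub_zero]

/-- x_{α₁} = E₁₂ ∈ 𝔫. -/
def xa1 : strictUpper :=
  ⟨Matrix.single 0 1 1, by
    intro i j hij
    fin_cases i <;> fin_cases j <;> simp_all [Matrix.single, Matrix.of_apply]⟩

/-- x_{α₂} = E₂₃ ∈ 𝔫. -/
def xa2 : strictUpper :=
  ⟨Matrix.single 1 2 1, by
    intro i j hij
    fin_cases i <;> fin_cases j <;> simp_all [Matrix.single, Matrix.of_apply]⟩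

/-- x_{α₁+α₂} = E₁₃ ∈ 𝔫. -/
def xa12 : strictUpper :=
  ⟨Matrix.single 0 2 1, by
    intro i j hij
    fin_cases i <;> fin_cases j <;> simp_all [Matrix.single, Matrix.of_apply]⟩

/-- The loop algebra n̄ = ℂ[t,t⁻¹] ⊗_ℂ 𝔫, with bracket
`[tᵐ ⊗ x, tⁿ ⊗ y] = t^{m+n} ⊗ [x,y]`. -/
abbrev loopN : Type := LaurentPolynomial ℂ ⊗[ℂ] strictUpper

/-- n̄ is a Lie algebra over ℂ (by restriction of scalars from ℂ[t,t⁻¹]). -/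
instance : LieAlgebra ℂ loopN where
  lie_smul c x y := by
    rw [← algebraMap_smul (LaurentPolynomial ℂ) c y,
      ← algebraMap_smul (LaurentPolynomial ℂ) c ⁅x, y⁆]
    exact lie_smul ((algebraMap ℂ (LaurentPolynomial ℂ)) c) x y

/-- The universal enveloping algebra U(n̄) over ℂ. -/
abbrev Uenv : Type := UniversalEnvelopingAlgebra ℂ loopN

/-- x(m) = tᵐ ⊗ x, viewed as an element of U(n̄). -/
def XX (x : strictUpper) (m : ℤ) : Uenv :=
  UniversalEnvelopingAlgebra.ι ℂ (LaurentPolynomial.T m ⊗ₜ[ℂ] x)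

/-- The ordered monomial x(m₁)⋯x(m_r) ∈ U(n̄) attached to a single root vector
`a` and a sequence of integers `m`. -/
def monom {r : ℕ} (a : strictUpper) (m : Fin r → ℤ) : Uenv :=
  (List.ofFn fun i => XX a (m i)).prod

/-- The left ideal U(n̄)n̄⁺ of U(n̄), generated by the x(m) with x ∈ 𝔫, m ≥ 0. -/
def UNplus : Ideal Uenv :=
  Ideal.span {u : Uenv | ∃ (x : strictUpper) (m : ℤ), 0 ≤ m ∧ u = XX x m}

/-- The truncated relation R^{[j]}_{t;m} = Σ_{m₁,m₂ ≤ m, m₁+m₂=t} x_{α_j}(m₁)x_{α_j}(m₂)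
(here `a` stands for the root vector x_{α_j}). -/
def Rtrunc (a : strictUpper) (t m : ℤ) : Uenv :=
  ∑ k ∈ Finset.Icc (t - m) m, XX a k * XX a (t - k)

/-- The two-sided ideal 𝒥 of U(n̄) generated by all R^{[j]}_{t;m}, j ∈ {1,2}. -/
def Jideal : TwoSidedIdeal Uenv :=
  TwoSidedIdeal.span {u : Uenv | ∃ t m : ℤ, u = Rtrunc xa1 t m ∨ u = Rtrunc xa2 t m}

/-- The difference two condition on a sequence m₁, …, m_r. -/
def diffTwo {r : ℕ} (m : Fin r → ℤ) : Prop :=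
  ∀ i j : Fin r, (i : ℕ) + 1 = (j : ℕ) → m i + 2 ≤ m j
section AuxProof
set_option synthInstance.maxHeartbeats 1000000
set_option maxHeartbeats 1000000

open LaurentPolynomial

lemma lie_gen (x y : strictUpper) (m n : ℤ) :
    XX x m * XX y n - XX y n * XX x m = XX ⁅x, y⁆ (m + n) := by
  have h := (UniversalEnvelopingAlgebra.ι ℂ (L := loopN)).map_lie
    (T (R := ℂ) m ⊗ₜ[ℂ] x) (T (R := ℂ) n ⊗ₜ[ℂ] y)
  rw [LieAlgebra.ExtendScalars.bracket_tmul, ← T_add, Ring.lie_def] at h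
  exact h.symm

lemma lie_xa1_xa2 : ⁅xa1, xa2⁆ = xa12 := by
  apply Subtype.ext
  rw [LieSubalgebra.coe_bracket, Ring.lie_def]
  show Matrix.single (0:Fin 3) (1:Fin 3) (1:ℂ) * Matrix.single (1:Fin 3) (2:Fin 3) (1:ℂ)
      - Matrix.single (1:Fin 3) (2:Fin 3) (1:ℂ) * Matrix.single (0:Fin 3) (1:Fin 3) (1:ℂ)
      = Matrix.single (0:Fin 3) (2:Fin 3) (1:ℂ)
  simp

lemma lie_xa1_xa1 : ⁅xa1, xa1⁆ = 0 := lie_self _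
lemma lie_xa2_xa2 : ⁅xa2, xa2⁆ = 0 := lie_self _

lemma lie_xa12_xa1 : ⁅xa12, xa1⁆ = 0 := by
  apply Subtype.ext
  rw [LieSubalgebra.coe_bracket, Ring.lie_def]
  show Matrix.single (0:Fin 3) (2:Fin 3) (1:ℂ) * Matrix.single (0:Fin 3) (1:Fin 3) (1:ℂ)
      - Matrix.single (0:Fin 3) (1:Fin 3) (1:ℂ) * Matrix.single (0:Fin 3) (2:Fin 3) (1:ℂ)
      = 0
  simp

lemma lie_xa12_xa2 : ⁅xa12, xa2⁆ = 0 := by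
  apply Subtype.ext
  rw [LieSubalgebra.coe_bracket, Ring.lie_def]
  show Matrix.single (0:Fin 3) (2:Fin 3) (1:ℂ) * Matrix.single (1:Fin 3) (2:Fin 3) (1:ℂ)
      - Matrix.single (1:Fin 3) (2:Fin 3) (1:ℂ) * Matrix.single (0:Fin 3) (2:Fin 3) (1:ℂ)
      = 0
  simp

lemma commute_of_lie_zero {x y : strictUpper} (h : ⁅x, y⁆ = 0) (m n : ℤ) :
    Commute (XX x m) (XX y n) := by
  have := lie_gen x y m n
  rw [h] at this
  have h0 : XX (0 : strictUpper) (m + n) = 0 := by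
    unfold XX
    rw [TensorProduct.tmul_zero]
    exact map_zero _
  rw [h0, sub_eq_zero] at this
  exact this

lemma comm11 (m n : ℤ) : Commute (XX xa1 m) (XX xa1 n) := commute_of_lie_zero lie_xa1_xa1 m n
lemma comm22 (m n : ℤ) : Commute (XX xa2 m) (XX xa2 n) := commute_of_lie_zero lie_xa2_xa2 m n
lemma commz1 (m n : ℤ) : Commute (XX xa12 m) (XX xa1 n) := commute_of_lie_zero lie_xa12_xa1 m n
lemma commz2 (m n : ℤ) : Commute (XX xa12 m) (XX xa2 n) := commute_of_lie_zero lie_xa12_xa2 m n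

lemma x1_mul_x2 (m n : ℤ) :
    XX xa1 m * XX xa2 n = XX xa2 n * XX xa1 m + XX xa12 (m + n) := by
  have := lie_gen xa1 xa2 m n
  rw [lie_xa1_xa2] at this
  exact sub_eq_iff_eq_add'.mp this


/-! ### Monomials indexed by lists and multisets -/

def X1l (L : List ℤ) : Uenv := (L.map (fun m => XX xa1 m)).prod
def X2l (L : List ℤ) : Uenv := (L.map (fun m => XX xa2 m)).prod
def X1m (M : Multiset ℤ) : Uenv := X1l (M.sort (· ≤ ·))
def X2m (M : Multiset ℤ) : Uenv := X2l (M.sort (· ≤ ·))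

lemma pairwise_comm {f : ℤ → Uenv} (h : ∀ a b : ℤ, Commute (f a) (f b)) (L : List ℤ) :
    (L.map f).Pairwise Commute := by
  induction L with
  | nil => simp
  | cons a t ih =>
      rw [List.map_cons, List.pairwise_cons]
      exact ⟨fun x hx => by
        obtain ⟨m, _, rfl⟩ := List.mem_map.mp hx
        exact h a m, ih⟩

lemma X1l_perm {L L' : List ℤ} (h : L.Perm L') : X1l L = X1l L' :=
  (h.map _).prod_eq' (pairwise_comm comm11 _)

lemma X2l_perm {L L' : List ℤ} (h : L.Perm L') : X2l L = X2l L' :=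
  (h.map _).prod_eq' (pairwise_comm comm22 _)

lemma X1m_coe (L : List ℤ) : X1m (↑L) = X1l L :=
  X1l_perm (Multiset.coe_eq_coe.mp (by rw [Multiset.sort_eq]))

lemma X2m_coe (L : List ℤ) : X2m (↑L) = X2l L :=
  X2l_perm (Multiset.coe_eq_coe.mp (by rw [Multiset.sort_eq]))

lemma X1m_cons (a : ℤ) (M : Multiset ℤ) : X1m (a ::ₘ M) = XX xa1 a * X1m M := by
  have h1 : (a ::ₘ M) = ((a :: M.sort (· ≤ ·) : List ℤ) : Multiset ℤ) := by
    rw [← Multiset.cons_coe, Multiset.sort_eq]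
  rw [h1, X1m_coe, X1l, List.map_cons, List.prod_cons]
  rfl

lemma X2m_cons (a : ℤ) (M : Multiset ℤ) : X2m (a ::ₘ M) = XX xa2 a * X2m M := by
  have h1 : (a ::ₘ M) = ((a :: M.sort (· ≤ ·) : List ℤ) : Multiset ℤ) := by
    rw [← Multiset.cons_coe, Multiset.sort_eq]
  rw [h1, X2m_coe, X2l, List.map_cons, List.prod_cons]
  rfl

lemma X1m_zero : X1m 0 = 1 := by
  rw [X1m, Multiset.sort_zero, X1l, List.map_nil, List.prod_nil]

lemma X2m_zero : X2m 0 = 1 := by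
  rw [X2m, Multiset.sort_zero, X2l, List.map_nil, List.prod_nil]

lemma commz_X1l (k : ℤ) (L : List ℤ) : Commute (XX xa12 k) (X1l L) :=
  Commute.list_prod_right _ _ (fun x hx => by
    obtain ⟨m, _, rfl⟩ := List.mem_map.mp hx
    exact commz1 k m)

lemma commz_X1m (k : ℤ) (M : Multiset ℤ) : Commute (XX xa12 k) (X1m M) := commz_X1l k _

lemma comm2_X2m (k : ℤ) (M : Multiset ℤ) : Commute (XX xa2 k) (X2m M) :=
  Commute.list_prod_right _ _ (fun x hx => by
    obtain ⟨m, _, rfl⟩ := List.mem_map.mp hx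
    exact comm22 k m)

lemma X2m_cons' (a : ℤ) (M : Multiset ℤ) : X2m (a ::ₘ M) = X2m M * XX xa2 a := by
  rw [X2m_cons, (comm2_X2m a M).eq]

lemma erase_cons_mem (a v : ℤ) (M : Multiset ℤ) (h : v ∈ M) :
    (a ::ₘ M).erase v = a ::ₘ M.erase v :=
  Multiset.erase_cons_tail_of_mem h

lemma zeq (a b : ℤ) : XX xa12 (a + b) = XX xa1 a * XX xa2 b - XX xa2 b * XX xa1 a := by
  have := lie_gen xa1 xa2 a b
  rw [lie_xa1_xa2] at this
  exact this.symm

/-- The key straightening identity. -/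
lemma key_identity (b : ℤ) (M : Multiset ℤ) :
    XX xa2 b * X1m M =
      X1m M * XX xa2 b - (M.map (fun v => X1m (M.erase v) * XX xa12 (b + v))).sum := by
  induction M using Multiset.induction_on with
  | empty => simp [X1m_zero]
  | cons a M ih =>
      have h2 : XX xa2 b * XX xa1 a = XX xa1 a * XX xa2 b - XX xa12 (a + b) := by
        rw [zeq a b, sub_sub_cancel]
      have h3 : (M.map (fun v => X1m ((a ::ₘ M).erase v) * XX xa12 (b + v))).sum
          = (M.map (fun v => XX xa1 a * (X1m (M.erase v) * XX xa12 (b + v)))).sum := by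
        apply congrArg
        apply Multiset.map_congr rfl
        intro v hv
        rw [erase_cons_mem a v M hv, X1m_cons, mul_assoc]
      have h4 : XX xa12 (a + b) * X1m M = X1m M * XX xa12 (b + a) := by
        rw [show a + b = b + a by ring, (commz_X1m (b + a) M).eq]
      rw [X1m_cons, Multiset.map_cons, Multiset.sum_cons, Multiset.erase_cons_head, h3,
        Multiset.sum_map_mul_left, ← mul_assoc, h2, sub_mul, mul_assoc, ih, mul_sub, h4,
        ← mul_assoc]
      abel

/-! ### The dual combinatorial lemma -/

theorem DCdual : ∀ R : ℕ, 1 ≤ R → ∀ c : Multiset ℤ → ℤ → ℂ,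
    (∀ A k, 0 ≤ k → c A k = 0) →
    (∀ M : Multiset ℤ, Multiset.card M = R → (∀ x ∈ M, x ≤ -1) →
      ∀ b : ℤ, 0 ≤ b → b ≤ (R : ℤ) - 1 →
      (M.map (fun v => c (M.erase v) (v + b))).sum = 0) →
    ∀ A, Multiset.card A = R - 1 → (∀ x ∈ A, x ≤ -1) → ∀ k, k ≤ -1 → c A k = 0 := by
  intro R
  induction R using Nat.strong_induction_on with
  | _ R IH =>
    intro hR c hsupp hrel A hcard hneg k hk
    rcases eq_or_lt_of_le hR with h1 | h2
    · -- R = 1 : A = 0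
      have hA : A = 0 := Multiset.card_eq_zero.mp (by omega)
      subst hA
      have hr := hrel {k} (by simp; omega) (by intro x hx; rw [Multiset.mem_singleton] at hx; omega)
        0 le_rfl (by omega)
      simpa using hr
    · -- R ≥ 2
      have hR2 : 2 ≤ R := h2
      have main : ∀ j : ℕ, 1 ≤ j →
          (∀ A', Multiset.card A' = R - 2 → (∀ x ∈ A', x ≤ -1) →
            ∀ k', c ((-(j:ℤ)) ::ₘ A') k' = 0) ∧
          (∀ M', Multiset.card M' = R - 1 → (∀ x ∈ M', x ≤ -1) → c M' (-(j:ℤ)) = 0) := by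
        intro j
        induction j using Nat.strong_induction_on with
        | _ j IHj =>
          intro hj
          have part1 : ∀ A', Multiset.card A' = R - 2 → (∀ x ∈ A', x ≤ -1) →
              ∀ k', c ((-(j:ℤ)) ::ₘ A') k' = 0 := by
            intro A' hA'card hA'neg k'
            rcases le_or_gt k' (-1) with hk' | hk'
            · -- apply the inductive hypothesis (on R) to the shifted function
              set c' : Multiset ℤ → ℤ → ℂ := fun B l => c ((-(j:ℤ)) ::ₘ B) (l + 1) with hc'
              have hsupp' : ∀ B l, 0 ≤ l → c' B l = 0 := by
                intro B l hl
                exact hsupp _ _ (by omega)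
              have hrel' : ∀ M' : Multiset ℤ, Multiset.card M' = R - 1 →
                  (∀ x ∈ M', x ≤ -1) → ∀ b : ℤ, 0 ≤ b → b ≤ ((R - 1 : ℕ) : ℤ) - 1 →
                  (M'.map (fun v => c' (M'.erase v) (v + b))).sum = 0 := by
                intro M' hMc hMn b hb0 hb1
                have hcast : ((R - 1 : ℕ) : ℤ) = (R : ℤ) - 1 := by omega
                have hr := hrel ((-(j:ℤ)) ::ₘ M')
                  (by rw [Multiset.card_cons, hMc]; omega)
                  (by intro x hx
                      rcases Multiset.mem_cons.mp hx with h | h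
                      · omega
                      · exact hMn x h)
                  (b + 1) (by omega) (by omega)
                rw [Multiset.map_cons, Multiset.sum_cons, Multiset.erase_cons_head] at hr
                have hfirst : c M' (-(j:ℤ) + (b + 1)) = 0 := by
                  rcases le_or_gt (j:ℤ) (b + 1) with h | h
                  · exact hsupp _ _ (by omega)
                  · set j' : ℕ := ((j:ℤ) - (b + 1)).toNat with hj'
                    have hj'1 : 1 ≤ j' := by omega
                    have hj'2 : j' < j := by omega
                    have := (IHj j' hj'2 hj'1).2 M' hMc hMn
                    rw [show -(j':ℤ) = -(j:ℤ) + (b + 1) by omega] at this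
                    exact this
                have hrest : (M'.map (fun v => c (((-(j:ℤ)) ::ₘ M').erase v) (v + (b + 1)))).sum
                    = (M'.map (fun v => c' (M'.erase v) (v + b))).sum := by
                  apply congrArg
                  apply Multiset.map_congr rfl
                  intro v hv
                  rw [erase_cons_mem _ v M' hv, hc']
                  show c ((-(j:ℤ)) ::ₘ M'.erase v) (v + (b + 1))
                      = c ((-(j:ℤ)) ::ₘ M'.erase v) (v + b + 1)
                  rw [show v + (b + 1) = v + b + 1 by ring]
                rw [hfirst, hrest, zero_add] at hr
                exact hr
              have hfin := IH (R - 1) (by omega) (by omega) c' hsupp' hrel'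
                A' (by omega) hA'neg (k' - 1) (by omega)
              rw [hc'] at hfin
              simpa using hfin
            · exact hsupp _ k' (by omega)
          refine ⟨part1, ?_⟩
          intro M' hcard' hneg'
          have hr := hrel ((-(j:ℤ)) ::ₘ M')
            (by rw [Multiset.card_cons, hcard']; omega)
            (by intro x hx
                rcases Multiset.mem_cons.mp hx with h | h
                · omega
                · exact hneg' x h)
            0 le_rfl (by omega)
          rw [Multiset.map_cons, Multiset.sum_cons, Multiset.erase_cons_head] at hr
          have hrest : (M'.map (fun v => c (((-(j:ℤ)) ::ₘ M').erase v) (v + 0))).sum = 0 := by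
            apply Multiset.sum_eq_zero
            intro x hx
            obtain ⟨v, hv, rfl⟩ := Multiset.mem_map.mp hx
            rw [erase_cons_mem _ v M' hv]
            exact part1 (M'.erase v)
              (by rw [Multiset.card_erase_of_mem hv, hcard', Nat.pred_eq_sub_one]; omega)
              (fun y hy => hneg' y (Multiset.mem_of_mem_erase hy)) _
          rw [hrest, add_zero, add_zero] at hr
          exact hr
      -- conclude
      obtain ⟨a, ha⟩ := Multiset.exists_mem_of_ne_zero
        (show A ≠ 0 by
          intro h0
          rw [h0] at hcard
          simp at hcard
          omega)
      have hane : a ≤ -1 := hneg a ha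
      have h := (main (-a).toNat (by omega)).1 (A.erase a)
        (by rw [Multiset.card_erase_of_mem ha, hcard, Nat.pred_eq_sub_one]; omega)
        (fun x hx => hneg x (Multiset.mem_of_mem_erase hx)) k
      rw [show -(((-a).toNat : ℕ) : ℤ) = a by omega, Multiset.cons_erase ha] at h
      exact h

/-! ### Duality, UNplus facts, and the core spanning lemma -/

lemma mem_of_forall_dual {V : Type} [AddCommGroup V] [Module ℂ V] (W : Submodule ℂ V) (x : V)
    (h : ∀ f : Module.Dual ℂ V, (∀ w ∈ W, f w = 0) → f x = 0) : x ∈ W := by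
  have hq : ∀ g : Module.Dual ℂ (V ⧸ W), g (Submodule.Quotient.mk x) = 0 := by
    intro g
    have := h (g.comp W.mkQ) (fun w hw => by
      have : W.mkQ w = 0 := (Submodule.Quotient.mk_eq_zero W).mpr hw
      simp [LinearMap.comp_apply, this])
    simpa using this
  have h0 := (Module.forall_dual_apply_eq_zero_iff ℂ
    (Submodule.Quotient.mk x : V ⧸ W)).mp hq
  exact (Submodule.Quotient.mk_eq_zero W).mp h0

lemma XX_mem_UNplus (x : strictUpper) (m : ℤ) (hm : 0 ≤ m) : XX x m ∈ UNplus :=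
  Submodule.subset_span ⟨x, m, hm, rfl⟩

lemma mul_mem_UNplus (u : Uenv) {v : Uenv} (hv : v ∈ UNplus) : u * v ∈ UNplus := by
  have := Submodule.smul_mem UNplus u hv
  simpa [smul_eq_mul] using this

lemma sum_erase_mem {M : Multiset ℤ} {v : ℤ} (h : v ∈ M) : (M.erase v).sum = M.sum - v := by
  have h2 := congrArg Multiset.sum (Multiset.cons_erase h)
  rw [Multiset.sum_cons] at h2
  omega

/-- The target space: span of `x₂(b)·X₁(M')` with `b ≤ R-1`, `M'` of size `R` with
entries `≤ -1` and total weight `s`, together with `U(n̄)n̄⁺`. -/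
def Wspan (R : ℕ) (s : ℤ) : Submodule ℂ Uenv :=
  Submodule.span ℂ {u : Uenv | ∃ b : ℤ, b ≤ (R : ℤ) - 1 ∧ ∃ M' : Multiset ℤ,
      Multiset.card M' = R ∧ (∀ x ∈ M', x ≤ -1) ∧ b + M'.sum = s ∧ u = XX xa2 b * X1m M'}
    ⊔ Submodule.restrictScalars ℂ (UNplus : Ideal Uenv)

lemma UNplus_le_Wspan (R : ℕ) (s : ℤ) {u : Uenv} (hu : u ∈ UNplus) : u ∈ Wspan R s :=
  Submodule.mem_sup_right hu

lemma target_mem_Wspan (R : ℕ) (s : ℤ) (b : ℤ) (hb : b ≤ (R : ℤ) - 1) (M' : Multiset ℤ)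
    (h1 : Multiset.card M' = R) (h2 : ∀ x ∈ M', x ≤ -1) (h3 : b + M'.sum = s) :
    XX xa2 b * X1m M' ∈ Wspan R s :=
  Submodule.mem_sup_left (Submodule.subset_span ⟨b, hb, M', h1, h2, h3, rfl⟩)

/-- Core spanning lemma for `X₁(A)·z(k)`. -/
lemma SC (R : ℕ) (hR : 1 ≤ R) (A : Multiset ℤ) (hA : Multiset.card A = R - 1)
    (hAneg : ∀ x ∈ A, x ≤ -1) (k : ℤ) (hk : k ≤ -1) :
    X1m A * XX xa12 k ∈ Wspan R (k + A.sum) := by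
  set s : ℤ := k + A.sum with hs
  apply mem_of_forall_dual
  intro f hf
  have hfU : ∀ u ∈ UNplus, f u = 0 := fun u hu => hf u (UNplus_le_Wspan R s hu)
  set c : Multiset ℤ → ℤ → ℂ := fun B l =>
    if Multiset.card B = R - 1 ∧ (∀ x ∈ B, x ≤ -1) ∧ l ≤ -1 ∧ l + B.sum = s
    then f (X1m B * XX xa12 l) else 0 with hc
  have hsupp : ∀ B l, 0 ≤ l → c B l = 0 := by
    intro B l hl
    exact if_neg (fun h => absurd h.2.2.1 (by omega))
  have hrel : ∀ M : Multiset ℤ, Multiset.card M = R → (∀ x ∈ M, x ≤ -1) →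
      ∀ b : ℤ, 0 ≤ b → b ≤ (R : ℤ) - 1 →
      (M.map (fun v => c (M.erase v) (v + b))).sum = 0 := by
    intro M hcard hneg b hb0 hb1
    by_cases hw : b + M.sum = s
    · have hterm : ∀ v ∈ M, c (M.erase v) (v + b)
          = f (X1m (M.erase v) * XX xa12 (b + v)) := by
        intro v hv
        rw [show v + b = b + v by ring]
        by_cases hvb : b + v ≤ -1
        · exact if_pos ⟨by rw [Multiset.card_erase_of_mem hv, hcard, Nat.pred_eq_sub_one],
            fun x hx => hneg x (Multiset.mem_of_mem_erase hx), hvb,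
            by rw [sum_erase_mem hv]; omega⟩
        · have h6 : c (M.erase v) (b + v) = 0 := if_neg (fun h => hvb h.2.2.1)
          rw [h6]
          symm
          exact hfU _ (mul_mem_UNplus _ (XX_mem_UNplus xa12 (b + v) (by omega)))
      rw [Multiset.map_congr rfl hterm]
      have hsum : (M.map (fun v => f (X1m (M.erase v) * XX xa12 (b + v)))).sum
          = f ((M.map (fun v => X1m (M.erase v) * XX xa12 (b + v))).sum) := by
        rw [map_multiset_sum, Multiset.map_map]
        rfl
      rw [hsum]
      have hkey := key_identity b M
      have : (M.map (fun v => X1m (M.erase v) * XX xa12 (b + v))).sum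
          = X1m M * XX xa2 b - XX xa2 b * X1m M := by
        rw [eq_sub_iff_add_eq, ← eq_sub_iff_add_eq', ← hkey]
      rw [this, map_sub]
      rw [hfU _ (mul_mem_UNplus _ (XX_mem_UNplus xa2 b hb0)),
        hf _ (target_mem_Wspan R s b hb1 M hcard hneg hw), sub_zero]
    · apply Multiset.sum_eq_zero
      intro x hx
      obtain ⟨v, hv, rfl⟩ := Multiset.mem_map.mp hx
      exact if_neg (fun h => hw (by have h7 := h.2.2.2; rw [sum_erase_mem hv] at h7; omega))
  have hfin := DCdual R hR c hsupp hrel A hA hAneg k hk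
  have h5 : c A k = f (X1m A * XX xa12 k) := if_pos ⟨hA, hAneg, hk, rfl⟩
  rw [← h5]
  exact hfin

/-- Core reduction lemma: a single `x₂(N)` with `N ≥ 0` against `X₁(M)`. -/
lemma CORE (R : ℕ) (hR : 1 ≤ R) (N : ℤ) (hN : 0 ≤ N) (M : Multiset ℤ)
    (hcard : Multiset.card M = R) (hneg : ∀ x ∈ M, x ≤ -1) :
    XX xa2 N * X1m M ∈ Wspan R (N + M.sum) := by
  rw [key_identity]
  apply sub_mem
  · exact UNplus_le_Wspan _ _ (mul_mem_UNplus _ (XX_mem_UNplus xa2 N hN))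
  · apply multiset_sum_mem
    intro x hx
    obtain ⟨v, hv, rfl⟩ := Multiset.mem_map.mp hx
    by_cases hvN : N + v ≤ -1
    · have := SC R hR (M.erase v)
        (by rw [Multiset.card_erase_of_mem hv, hcard, Nat.pred_eq_sub_one])
        (fun x hx => hneg x (Multiset.mem_of_mem_erase hx)) (N + v) hvN
      rw [sum_erase_mem hv] at this
      rw [show N + v + (M.sum - v) = N + M.sum by ring] at this
      exact this
    · exact UNplus_le_Wspan _ _ (mul_mem_UNplus _ (XX_mem_UNplus xa12 (N + v) (by omega)))

/-! ### Global reduction and the final theorem -/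

def Wfinal (r2 r1 : ℕ) (s : ℤ) : Submodule ℂ Uenv :=
  Submodule.span ℂ {u : Uenv | ∃ M2 M1 : Multiset ℤ,
      Multiset.card M2 = r2 ∧ Multiset.card M1 = r1 ∧
      (∀ x ∈ M2, x ≤ (r1 : ℤ) - 1) ∧ (∀ x ∈ M1, x ≤ -1) ∧
      M2.sum + M1.sum = s ∧ u = X2m M2 * X1m M1}
    ⊔ Submodule.restrictScalars ℂ (UNplus : Ideal Uenv)

lemma GLOBAL (r1 : ℕ) (hr1 : 1 ≤ r1) (r2 : ℕ) (s : ℤ) :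
    ∀ n : ℕ, ∀ M2 M1 : Multiset ℤ, Multiset.card M2 = r2 → Multiset.card M1 = r1 →
    (∀ x ∈ M1, x ≤ -1) → M2.sum + M1.sum = s →
    Multiset.card (M2.filter (fun x => (r1 : ℤ) ≤ x)) = n →
    X2m M2 * X1m M1 ∈ Wfinal r2 r1 s := by
  intro n
  induction n using Nat.strong_induction_on with
  | _ n IH =>
    intro M2 M1 h2 h1 hneg hsum hbad
    rcases Nat.eq_zero_or_pos n with h0 | hpos
    · have hgood : ∀ x ∈ M2, x ≤ (r1 : ℤ) - 1 := by
        intro x hx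
        by_contra hcon
        have hmem : x ∈ M2.filter (fun x => (r1 : ℤ) ≤ x) :=
          Multiset.mem_filter.mpr ⟨hx, by omega⟩
        rw [h0] at hbad
        rw [Multiset.card_eq_zero.mp hbad] at hmem
        exact absurd hmem (Multiset.notMem_zero x)
      exact Submodule.mem_sup_left
        (Submodule.subset_span ⟨M2, M1, h2, h1, hgood, hneg, hsum, rfl⟩)
    · obtain ⟨N, hNf⟩ := Multiset.exists_mem_of_ne_zero
        (show M2.filter (fun x => (r1 : ℤ) ≤ x) ≠ 0 by
          intro hzero; rw [hzero] at hbad; simp at hbad; omega)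
      obtain ⟨hNmem, hNbig⟩ := Multiset.mem_filter.mp hNf
      set M2' : Multiset ℤ := M2.erase N with hM2'
      have hM2 : M2 = N ::ₘ M2' := (Multiset.cons_erase hNmem).symm
      have hbad' : Multiset.card (M2'.filter (fun x => (r1 : ℤ) ≤ x)) = n - 1 := by
        have : M2.filter (fun x => (r1 : ℤ) ≤ x)
            = N ::ₘ M2'.filter (fun x => (r1 : ℤ) ≤ x) := by
          rw [hM2, Multiset.filter_cons_of_pos _ hNbig]
        rw [this, Multiset.card_cons] at hbad
        omega
      have hcard2' : Multiset.card M2' = r2 - 1 := by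
        rw [hM2', Multiset.card_erase_of_mem hNmem, h2, Nat.pred_eq_sub_one]
      have hr2pos : 1 ≤ r2 := by
        rw [← h2, hM2, Multiset.card_cons]; omega
      have hstep : ∀ u ∈ Wspan r1 (N + M1.sum), X2m M2' * u ∈ Wfinal r2 r1 s := by
        intro u hu
        obtain ⟨a, haT, b', hbU, hab⟩ := Submodule.mem_sup.mp hu
        rw [← hab, mul_add]
        apply add_mem
        · refine Submodule.span_induction ?_ ?_ ?_ ?_ haT
          · rintro x ⟨b, hb, M1', hM1'c, hM1'n, hM1's, rfl⟩
            have heq : X2m M2' * (XX xa2 b * X1m M1') = X2m (b ::ₘ M2') * X1m M1' := by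
              rw [X2m_cons', mul_assoc]
            rw [heq]
            refine IH (n - 1) (by omega) (b ::ₘ M2') M1' ?_ hM1'c hM1'n ?_ ?_
            · rw [Multiset.card_cons, hcard2']; omega
            · rw [Multiset.sum_cons]
              have hsum2 : M2.sum = N + M2'.sum := by rw [hM2, Multiset.sum_cons]
              omega
            · rw [Multiset.filter_cons_of_neg _ (show ¬ ((r1:ℤ) ≤ b) by omega)]
              exact hbad'
          · rw [mul_zero]; exact zero_mem _
          · intro x y _ _ hx hy
            rw [mul_add]; exact add_mem hx hy
          · intro a x _ hx
            rw [mul_smul_comm]; exact Submodule.smul_mem _ _ hx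
        · exact Submodule.mem_sup_right (mul_mem_UNplus _ hbU)
      have hcore := CORE r1 hr1 N (by omega) M1 h1 hneg
      have := hstep _ hcore
      rw [← mul_assoc, ← X2m_cons', ← hM2] at this
      exact this

lemma monom_eq_X2m {r : ℕ} (g : Fin r → ℤ) : monom xa2 g = X2m (↑(List.ofFn g)) := by
  rw [X2m_coe, X2l, List.map_ofFn]
  rfl

lemma monom_eq_X1m {r : ℕ} (g : Fin r → ℤ) : monom xa1 g = X1m (↑(List.ofFn g)) := by
  rw [X1m_coe, X1l, List.map_ofFn]
  rfl

lemma sorted_tuple (r : ℕ) (M : Multiset ℤ) (h : Multiset.card M = r) :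
    ∃ g : Fin r → ℤ, Monotone g ∧ (∀ i, g i ∈ M) ∧ ((∑ i, g i) = M.sum) ∧
      List.ofFn g = M.sort (· ≤ ·) := by
  have hlen : (M.sort (· ≤ ·)).length = r := by rw [Multiset.length_sort, h]
  have hofn : List.ofFn (fun i : Fin r => (M.sort (· ≤ ·)).get (Fin.cast hlen.symm i))
      = M.sort (· ≤ ·) := by
    apply List.ext_get (by rw [List.length_ofFn, hlen])
    intro i h1 h2
    rw [List.get_ofFn]
    rfl
  refine ⟨fun i => (M.sort (· ≤ ·)).get (Fin.cast hlen.symm i), ?_, ?_, ?_, hofn⟩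
  · intro i j hij
    exact (Multiset.pairwise_sort M _).rel_get_of_le hij
  · intro i
    rw [← Multiset.mem_sort (· ≤ ·)]
    exact List.get_mem _ _
  · rw [← List.sum_ofFn, hofn]
    conv_rhs => rw [← Multiset.sort_eq M (· ≤ ·)]
    exact (Multiset.sum_coe _).symm

end AuxProof

/-- Lemma 3.4 of the paper (truncation): for `r₁, r₂ ≥ 1`,
`m_{1,2} ≤ ⋯ ≤ m_{r₂,2}` with `m_{r₂,2} ≥ r₁` and `m_{1,1} ≤ ⋯ ≤ m_{r₁,1} ≤ −1`,
the monomial `x_{α₂}(m_{1,2})⋯x_{α₂}(m_{r₂,2})x_{α₁}(m_{1,1})⋯x_{α₁}(m_{r₁,1})`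
is a ℂ-linear combination of such monomials with `m'_{r₂,2} ≤ r₁ − 1`,
`m'_{r₁,1} ≤ −1` and the same total index sum, plus an element of U(n̄)n̄⁺. -/
theorem statement3 (r1 r2 : ℕ) (hr1 : 1 ≤ r1) (hr2 : 1 ≤ r2)
    (m2 : Fin r2 → ℤ) (m1 : Fin r1 → ℤ)
    (hm2 : Monotone m2) (hm1 : Monotone m1)
    (hm1neg : ∀ i, m1 i ≤ -1)
    (hm2big : (r1 : ℤ) ≤ m2 ⟨r2 - 1, by omega⟩) :
    ∃ v ∈ Submodule.span ℂ {u : Uenv |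
        ∃ (m2' : Fin r2 → ℤ) (m1' : Fin r1 → ℤ),
          Monotone m2' ∧ Monotone m1' ∧
          (∀ i, m2' i ≤ (r1 : ℤ) - 1) ∧ (∀ i, m1' i ≤ -1) ∧
          ((∑ i, m2' i) + ∑ i, m1' i = (∑ i, m2 i) + ∑ i, m1 i) ∧
          u = monom xa2 m2' * monom xa1 m1'},
      ∃ w ∈ UNplus, monom xa2 m2 * monom xa1 m1 = v + w := by
  have hmem : monom xa2 m2 * monom xa1 m1
      ∈ Wfinal r2 r1 ((∑ i, m2 i) + ∑ i, m1 i) := by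
    rw [monom_eq_X2m, monom_eq_X1m]
    refine GLOBAL r1 hr1 r2 _ _ (↑(List.ofFn m2)) (↑(List.ofFn m1)) ?_ ?_ ?_ ?_ rfl
    · rw [Multiset.coe_card, List.length_ofFn]
    · rw [Multiset.coe_card, List.length_ofFn]
    · intro x hx
      rw [Multiset.mem_coe, List.mem_ofFn] at hx
      obtain ⟨i, rfl⟩ := hx
      exact hm1neg i
    · rw [Multiset.sum_coe, Multiset.sum_coe, List.sum_ofFn, List.sum_ofFn]
  have hle : Wfinal r2 r1 ((∑ i, m2 i) + ∑ i, m1 i) ≤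
      Submodule.span ℂ {u : Uenv |
        ∃ (m2' : Fin r2 → ℤ) (m1' : Fin r1 → ℤ),
          Monotone m2' ∧ Monotone m1' ∧
          (∀ i, m2' i ≤ (r1 : ℤ) - 1) ∧ (∀ i, m1' i ≤ -1) ∧
          ((∑ i, m2' i) + ∑ i, m1' i = (∑ i, m2 i) + ∑ i, m1 i) ∧
          u = monom xa2 m2' * monom xa1 m1'}
      ⊔ Submodule.restrictScalars ℂ (UNplus : Ideal Uenv) := by
    apply sup_le
    · apply Submodule.span_le.mpr
      rintro u ⟨M2, M1, hc2, hc1, hb2, hb1, hsum, rfl⟩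
      obtain ⟨g2, hg2mono, hg2mem, hg2sum, hg2ofn⟩ := sorted_tuple r2 M2 hc2
      obtain ⟨g1, hg1mono, hg1mem, hg1sum, hg1ofn⟩ := sorted_tuple r1 M1 hc1
      have heq : X2m M2 * X1m M1 = monom xa2 g2 * monom xa1 g1 := by
        rw [monom_eq_X2m, monom_eq_X1m, hg2ofn, hg1ofn,
          Multiset.sort_eq, Multiset.sort_eq]
      rw [SetLike.mem_coe, heq]
      exact Submodule.mem_sup_left (Submodule.subset_span
        ⟨g2, g1, hg2mono, hg1mono,
          fun i => hb2 (g2 i) (hg2mem i),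
          fun i => hb1 (g1 i) (hg1mem i),
          by rw [hg2sum, hg1sum, hsum],
          rfl⟩)
    · intro u hu
      exact Submodule.mem_sup_right hu
  obtain ⟨v, hv, w, hw, hvw⟩ := Submodule.mem_sup.mp (hle hmem)
  exact ⟨v, hv, w, hw, hvw.symm⟩

end
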